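/- For a connected finite graph H with linearly ordered edges and edge weights γ, the connected-spanning-subgraph generating function satisfies [q^1] Z_T(H;q,γ) = Σ_{T ∈ T(H)} (∏_{e∈E(T)} γ_e) · (∏_{e externally active w.r.t. T} (1 + γ_e)), where T(H) is the set of spanning trees of H. -/

import Mathlib

open scoped Classical
open Finset

structure MGraph (V E : Type) where
  ends : E → Sym2 V

namespace MGraph

variable {V E S R : Type} [Fintype V] [Fintype E]

/-- Two vertices are joined by an edge of `A`. -/
def adjRel (G : MGraph V E) (A : Finset E) (u v : V) : Prop :=
  ∃ e ∈ A, G.ends e = s(u, v)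

/-- The setoid on vertices whose classes are the connected components of the
spanning subgraph `(V, A)`. -/
def compSetoid (G : MGraph V E) (A : Finset E) : Setoid V :=
  ⟨Relation.EqvGen (G.adjRel A), Relation.EqvGen.is_equivalence _⟩

/-- The connected components of the spanning subgraph `(V, A)`. -/
def Comp (G : MGraph V E) (A : Finset E) : Type := Quotient (G.compSetoid A)

noncomputable instance (G : MGraph V E) (A : Finset E) : Fintype (G.Comp A) :=
  @Quotient.fintype V _ (G.compSetoid A) (Classical.decRel _)

/-- `k(A)`: the number of connected components of the spanning subgraph `(V, A)`. -/
noncomputable def kA (G : MGraph V E) (A : Finset E) : ℕ := Nat.card (G.Comp A)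

/-- `u` and `v` are connected in the spanning subgraph `(V, A)`. -/
def Connects (G : MGraph V E) (A : Finset E) (u v : V) : Prop :=
  Relation.EqvGen (G.adjRel A) u v

/-- The endpoints of `e` are connected in the spanning subgraph `(V, A)`. -/
def EndsConnected (G : MGraph V E) (A : Finset E) (e : E) : Prop :=
  ∃ u v, G.ends e = s(u, v) ∧ G.Connects A u v

def IsLoop (G : MGraph V E) (e : E) : Prop := (G.ends e).IsDiag

/-- `(V, A)` is a forest (acyclic spanning subgraph): every edge of `A` is a bridge of it. -/
def IsForest (G : MGraph V E) (A : Finset E) : Prop :=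
  ∀ e ∈ A, ¬ G.EndsConnected (A.erase e) e

/-- All vertices are pairwise connected using edges of `A`. -/
def ConnectsAll (G : MGraph V E) (A : Finset E) : Prop := ∀ u v, G.Connects A u v

/-- A maximal spanning forest: a forest restricting to a spanning tree of each
connected component of `G`. -/
def IsSpanningTree (G : MGraph V E) (T : Finset E) : Prop :=
  G.IsForest T ∧ ∀ u v, G.Connects T u v ↔ G.Connects Finset.univ u v

/-- `e ∈ T` is internally active: `e` is minimal in the cut
`{f : (T - e) ∪ {f} ∈ 𝒯(G)}`. -/
def IntActive [LinearOrder E] (G : MGraph V E) (T : Finset E) (e : E) : Prop :=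
  e ∈ T ∧ ∀ f, G.IsSpanningTree (insert f (T.erase e)) → e ≤ f

/-- The edge set of the unique cycle of `T ∪ {e}` (when it exists):
`e` together with those `f ∈ T` whose removal disconnects the ends of `e`. -/
noncomputable def cycleEdges (G : MGraph V E) (T : Finset E) (e : E) : Finset E :=
  insert e (T.filter fun f => ¬ G.EndsConnected (T.erase f) e)

/-- `e ∉ T` is externally active: `T ∪ {e}` contains a cycle through `e` and
`e` is the minimal edge of that cycle. -/
def ExtActive [LinearOrder E] (G : MGraph V E) (T : Finset E) (e : E) : Prop :=
  e ∉ T ∧ G.EndsConnected T e ∧ ∀ f ∈ G.cycleEdges T e, e ≤ f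

/-- The vertex set of the component `c` of `(V, A)`. -/
noncomputable def compVerts (G : MGraph V E) (A : Finset E) (c : G.Comp A) : Finset V :=
  Finset.univ.filter fun v => (Quotient.mk (G.compSetoid A) v) = c

/-- The total vertex weight of the component `c` of `(V, A)`. -/
noncomputable def compWeight [AddCommMonoid S] (G : MGraph V E) (A : Finset E)
    (ω : V → S) (c : G.Comp A) : S :=
  ∑ v ∈ G.compVerts A c, ω v

/-- The V-polynomial, defined by its state sum. -/
noncomputable def Vpoly [AddCommMonoid S] [CommRing R] (G : MGraph V E)
    (ω : V → S) (γ : E → R) : MvPolynomial S R :=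
  ∑ A : Finset E, (∏ c : G.Comp A, MvPolynomial.X (G.compWeight A ω c)) *
    MvPolynomial.C (∏ e ∈ A, γ e)

/-- The multivariate Tutte polynomial `Z_T(G; q, γ)` as a polynomial in `q`. -/
noncomputable def ZT [CommRing R] (G : MGraph V E) (γ : E → R) : Polynomial R :=
  ∑ A : Finset E, Polynomial.X ^ (G.kA A) * Polynomial.C (∏ e ∈ A, γ e)

/-- Deletion of the edge `e`. -/
def del (G : MGraph V E) (e : E) : MGraph V {f : E // f ≠ e} := ⟨fun f => G.ends f.1⟩

/-- Contraction of the edge `e`: vertices are the components of `(V, {e})`. -/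
noncomputable def contract (G : MGraph V E) (e : E) : MGraph (G.Comp {e}) {f : E // f ≠ e} :=
  ⟨fun f => (G.ends f.1).map (Quotient.mk (G.compSetoid {e}))⟩

/-- The forest `T` with the edges of `B` contracted: vertices are the components
of `(V, B)` and edges are `T \ B`. -/
noncomputable def contractIn (G : MGraph V E) (T B : Finset E) :
    MGraph (G.Comp B) ↥(T \ B : Finset E) :=
  ⟨fun f => (G.ends f.1).map (Quotient.mk (G.compSetoid B))⟩

/-- The edges of `G` with both ends inside `P`. -/
noncomputable def edgesIn (G : MGraph V E) (P : Finset V) : Finset E :=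
  Finset.univ.filter fun e => ∀ v ∈ G.ends e, v ∈ P

/-- The subgraph of `G` induced by the vertex set `P`. -/
noncomputable def induce (G : MGraph V E) (P : Finset V) : MGraph ↥P ↥(G.edgesIn P) :=
  ⟨fun e => (G.ends e.1).pmap (fun v hv => (⟨v, hv⟩ : ↥P))
    (by have he := e.2; simp only [edgesIn, Finset.mem_filter] at he; exact he.2)⟩

/-- The block `B` induces a connected subgraph of `G`. -/
def BlockConnected (G : MGraph V E) (B : Finset V) : Prop :=
  ∀ u ∈ B, ∀ v ∈ B, Relation.EqvGen (G.adjRel (G.edgesIn B)) u v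

/-- A connected partition of `V(G)`: every vertex lies in exactly one block,
blocks are nonempty, and each block induces a connected subgraph. -/
def IsConnectedPartition (G : MGraph V E) (P : Finset (Finset V)) : Prop :=
  (∀ B ∈ P, B.Nonempty) ∧ (∀ v : V, ∃! B, B ∈ P ∧ v ∈ B) ∧ ∀ B ∈ P, G.BlockConnected B

/-- The partition `Π(A)` of `V(G)` into the components of `(V, A)`. -/
noncomputable def partitionOf (G : MGraph V E) (A : Finset E) : Finset (Finset V) :=
  Finset.univ.image fun c : G.Comp A => G.compVerts A c

/-- The internally inactive edges of the spanning tree `T`. -/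
noncomputable def intInactives [LinearOrder E] (G : MGraph V E) (T : Finset E) : Finset E :=
  T.filter fun e => ¬ G.IntActive T e

/-- The internally active edges of the spanning tree `T`. -/
noncomputable def intActives [LinearOrder E] (G : MGraph V E) (T : Finset E) : Finset E :=
  T.filter fun e => G.IntActive T e

/-- The externally active edges w.r.t. the spanning tree / forest `T`. -/
noncomputable def extActives [LinearOrder E] (G : MGraph V E) (T : Finset E) : Finset E :=
  Finset.univ.filter fun e => G.ExtActive T e

/-- Kronecker delta `δ(σ_i, σ_j)` for the two ends of the edge `e`. -/
noncomputable def edgeDelta (G : MGraph V E) {q : ℕ} (σ : V → Fin q) (e : E) : ℂ :=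
  Sym2.lift ⟨fun u v => if σ u = σ v then 1 else 0, fun u v => by simp [eq_comm]⟩ (G.ends e)

/-- The Potts partition function with variable interactions `J` and
field vectors `M`. -/
noncomputable def Zext (G : MGraph V E) (q : ℕ) (β : ℂ) (J : E → ℂ) (M : V → Fin q → ℂ) : ℂ :=
  ∑ σ : V → Fin q, Complex.exp (β * ((∑ e : E, J e * G.edgeDelta σ e) +
    ∑ v : V, ∑ α : Fin q, M v α * (if α = σ v then 1 else 0)))

/-- The Potts partition function with constant interaction `J` and constant
field `H` favouring the first spin. -/
noncomputable def ZconstField (G : MGraph V E) (q : ℕ) (β J H : ℂ) : ℂ :=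
  ∑ σ : V → Fin q, Complex.exp (β * (J * (∑ e : E, G.edgeDelta σ e) +
    H * ∑ v : V, (if (σ v : ℕ) = 0 then (1 : ℂ) else 0)))

/-- The zero-field Potts partition function with constant interaction `J`. -/
noncomputable def Zzero (G : MGraph V E) (q : ℕ) (β J : ℂ) : ℂ :=
  ∑ σ : V → Fin q, Complex.exp (β * J * ∑ e : E, G.edgeDelta σ e)

end MGraph
section Aux
set_option linter.unusedSectionVars false
attribute [local instance 2000] Classical.propDecidable

open Relation

variable {V E : Type} [Fintype V] [Fintype E]

namespace MGraph

lemma sym2_exists {α : Type*} (z : Sym2 α) : ∃ a b, z = s(a, b) :=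
  Sym2.ind (fun a b => ⟨a, b, rfl⟩) z

lemma connects_mono (H : MGraph V E) {A B : Finset E} (hAB : A ⊆ B) {u v : V}
    (h : H.Connects A u v) : H.Connects B u v := by
  refine Relation.EqvGen.mono ?_ _ _ h
  rintro x y ⟨e, he, hxy⟩
  exact ⟨e, hAB he, hxy⟩

lemma connects_refl (H : MGraph V E) (A : Finset E) (u : V) : H.Connects A u u :=
  Relation.EqvGen.refl u

lemma connects_symm (H : MGraph V E) {A : Finset E} {u v : V}
    (h : H.Connects A u v) : H.Connects A v u := Relation.EqvGen.symm _ _ h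

lemma connects_trans (H : MGraph V E) {A : Finset E} {u v w : V}
    (h : H.Connects A u v) (h' : H.Connects A v w) : H.Connects A u w :=
  Relation.EqvGen.trans _ _ _ h h'

lemma connects_of_edge (H : MGraph V E) {A : Finset E} {e : E} {x y : V}
    (he : e ∈ A) (hxy : H.ends e = s(x, y)) : H.Connects A x y :=
  Relation.EqvGen.rel _ _ ⟨e, he, hxy⟩

lemma endsConnected_iff (H : MGraph V E) {A : Finset E} {e : E} {x y : V}
    (hxy : H.ends e = s(x, y)) : H.EndsConnected A e ↔ H.Connects A x y := by
  constructor
  · rintro ⟨u, v, huv, h⟩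
    rw [hxy] at huv
    rcases Sym2.eq_iff.1 huv with ⟨rfl, rfl⟩ | ⟨rfl, rfl⟩
    · exact h
    · exact H.connects_symm h
  · exact fun h => ⟨x, y, hxy, h⟩

/-- Lifting lemma: if the ends of every edge of `B` are connected in `C`, then
connectivity in `B` implies connectivity in `C`. -/
lemma connects_lift (H : MGraph V E) {B C : Finset E}
    (hBC : ∀ e ∈ B, H.EndsConnected C e) {u v : V}
    (h : H.Connects B u v) : H.Connects C u v := by
  induction h with
  | rel x y hxy =>
    obtain ⟨e, he, hends⟩ := hxy
    exact (H.endsConnected_iff hends).1 (hBC e he)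
  | refl x => exact H.connects_refl C x
  | symm x y _ ih => exact H.connects_symm ih
  | trans x y z _ _ ih1 ih2 => exact H.connects_trans ih1 ih2

/-- Cut lemma for `insert`. -/
lemma connects_insert (H : MGraph V E) {B : Finset E} {e : E} {x y : V}
    (hends : H.ends e = s(x, y)) {u v : V}
    (h : H.Connects (insert e B) u v) :
    H.Connects B u v ∨ (H.Connects B u x ∧ H.Connects B y v)
      ∨ (H.Connects B u y ∧ H.Connects B x v) := by
  induction h with
  | rel a b hab =>
    obtain ⟨f, hf, hfab⟩ := hab
    rcases Finset.mem_insert.1 hf with rfl | hf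
    · rw [hends] at hfab
      rcases Sym2.eq_iff.1 hfab with ⟨rfl, rfl⟩ | ⟨rfl, rfl⟩
      · exact Or.inr (Or.inl ⟨H.connects_refl B _, H.connects_refl B _⟩)
      · exact Or.inr (Or.inr ⟨H.connects_refl B _, H.connects_refl B _⟩)
    · exact Or.inl (H.connects_of_edge hf hfab)
  | refl a => exact Or.inl (H.connects_refl B a)
  | symm a b _ ih =>
    rcases ih with h1 | ⟨h1, h2⟩ | ⟨h1, h2⟩
    · exact Or.inl (H.connects_symm h1)
    · exact Or.inr (Or.inr ⟨H.connects_symm h2, H.connects_symm h1⟩)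
    · exact Or.inr (Or.inl ⟨H.connects_symm h2, H.connects_symm h1⟩)
  | trans a b c _ _ ih1 ih2 =>
    rcases ih1 with h1 | ⟨h1, h2⟩ | ⟨h1, h2⟩ <;>
      rcases ih2 with h3 | ⟨h3, h4⟩ | ⟨h3, h4⟩
    · exact Or.inl (H.connects_trans h1 h3)
    · exact Or.inr (Or.inl ⟨H.connects_trans h1 h3, h4⟩)
    · exact Or.inr (Or.inr ⟨H.connects_trans h1 h3, h4⟩)
    · exact Or.inr (Or.inl ⟨h1, H.connects_trans h2 h3⟩)
    · exact Or.inr (Or.inl ⟨h1, h4⟩)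
    · exact Or.inl (H.connects_trans h1 h4)
    · exact Or.inr (Or.inr ⟨h1, H.connects_trans h2 h3⟩)
    · exact Or.inl (H.connects_trans h1 h4)
    · exact Or.inr (Or.inr ⟨h1, h4⟩)

/-- Cut lemma for `erase`. -/
lemma connects_erase (H : MGraph V E) {B : Finset E} {f : E} {a b : V}
    (hends : H.ends f = s(a, b)) {u v : V}
    (h : H.Connects B u v) (h' : ¬ H.Connects (B.erase f) u v) :
    (H.Connects (B.erase f) u a ∧ H.Connects (B.erase f) b v)
      ∨ (H.Connects (B.erase f) u b ∧ H.Connects (B.erase f) a v) := by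
  have hsub : B ⊆ insert f (B.erase f) := Finset.subset_insert_iff.2 le_rfl
  have := H.connects_insert hends (H.connects_mono hsub h)
  rcases this with h1 | h1 | h1
  · exact absurd h1 h'
  · exact Or.inl h1
  · exact Or.inr h1

/-- Minimal connecting subsets exist. -/
lemma exists_minimal_connecting (H : MGraph V E) :
    ∀ (B : Finset E) (u v : V), H.Connects B u v →
      ∃ P, P ⊆ B ∧ H.Connects P u v ∧ ∀ f ∈ P, ¬ H.Connects (P.erase f) u v := by
  intro B
  induction B using Finset.strongInduction with
  | _ B ih =>
    intro u v h
    by_cases hf : ∃ f ∈ B, H.Connects (B.erase f) u v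
    · obtain ⟨f, hfB, hc⟩ := hf
      obtain ⟨P, hPB, h1, h2⟩ := ih (B.erase f) (Finset.erase_ssubset hfB) u v hc
      exact ⟨P, hPB.trans (Finset.erase_subset _ _), h1, h2⟩
    · exact ⟨B, subset_rfl, h, fun f hf' hc => hf ⟨f, hf', hc⟩⟩

/-- In a forest, an edge essential in a connecting subset is essential in the forest. -/
lemma forest_essential (H : MGraph V E) {T P : Finset E} (hT : H.IsForest T)
    (hPT : P ⊆ T) {x y : V} (hP : H.Connects P x y) {f : E} (hfP : f ∈ P)
    (hess : ¬ H.Connects (P.erase f) x y) : ¬ H.Connects (T.erase f) x y := by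
  intro hcon
  obtain ⟨a, b, hab⟩ := MGraph.sym2_exists (H.ends f)
  have hsub : P.erase f ⊆ T.erase f := Finset.erase_subset_erase _ hPT
  rcases H.connects_erase hab hP hess with ⟨h1, h2⟩ | ⟨h1, h2⟩
  · exact hT f (hPT hfP) ⟨a, b, hab,
      H.connects_trans (H.connects_symm (H.connects_mono hsub h1))
        (H.connects_trans hcon (H.connects_symm (H.connects_mono hsub h2)))⟩
  · exact hT f (hPT hfP) ⟨a, b, hab,
      H.connects_trans (H.connects_mono hsub h2)
        (H.connects_trans (H.connects_symm hcon) (H.connects_mono hsub h1))⟩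

variable [LinearOrder E]

/-- The greedy (maximum) spanning forest of `A`. -/
noncomputable def Tsel (H : MGraph V E) (A : Finset E) : Finset E :=
  A.filter fun e => ¬ H.EndsConnected (A.filter fun f => e < f) e

lemma Tsel_subset (H : MGraph V E) (A : Finset E) : H.Tsel A ⊆ A :=
  Finset.filter_subset _ _

lemma endsConnected_Tsel (H : MGraph V E) (A : Finset E) :
    ∀ e ∈ A, H.EndsConnected (H.Tsel A) e := by
  have : ∀ e : E, e ∈ A → H.EndsConnected (H.Tsel A) e := by
    intro e
    induction e using (Finite.to_wellFoundedGT (α := E)).wf.induction with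
    | _ e ih =>
      intro heA
      by_cases heT : e ∈ H.Tsel A
      · obtain ⟨a, b, hab⟩ := MGraph.sym2_exists (H.ends e)
        exact ⟨a, b, hab, H.connects_of_edge heT hab⟩
      · have : H.EndsConnected (A.filter fun f => e < f) e := by
          by_contra hc
          exact heT (Finset.mem_filter.2 ⟨heA, hc⟩)
        obtain ⟨a, b, hab, hcon⟩ := this
        refine ⟨a, b, hab, H.connects_lift ?_ hcon⟩
        intro f hf
        rw [Finset.mem_filter] at hf
        exact ih f hf.2 hf.1
  exact this

lemma connectsAll_Tsel (H : MGraph V E) {A : Finset E} (h : H.ConnectsAll A) :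
    H.ConnectsAll (H.Tsel A) := fun u v =>
  H.connects_lift (H.endsConnected_Tsel A) (h u v)

lemma isForest_Tsel (H : MGraph V E) (A : Finset E) : H.IsForest (H.Tsel A) := by
  intro e heT hend
  have heA : e ∈ A := H.Tsel_subset A heT
  have hne : ¬ H.EndsConnected (A.filter fun f => e < f) e :=
    (Finset.mem_filter.1 heT).2
  obtain ⟨x, y, hab⟩ := MGraph.sym2_exists (H.ends e)
  have hcon : H.Connects ((H.Tsel A).erase e) x y := (H.endsConnected_iff hab).1 hend
  obtain ⟨P, hPsub, hPcon, hPmin⟩ := H.exists_minimal_connecting _ x y hcon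
  by_cases hPe : P = ∅
  · subst hPe
    refine hne ((H.endsConnected_iff hab).2 (H.connects_mono (Finset.empty_subset _) hPcon))
  · have hPne : P.Nonempty := Finset.nonempty_iff_ne_empty.2 hPe
    set g := P.min' hPne with hg
    have hgP : g ∈ P := P.min'_mem hPne
    have hgle : ∀ f ∈ P, g ≤ f := fun f hf => P.min'_le f hf
    have hgTsel : g ∈ H.Tsel A := Finset.mem_of_mem_erase (hPsub hgP)
    have hgne : ¬ H.EndsConnected (A.filter fun f => g < f) g :=
      (Finset.mem_filter.1 hgTsel).2
    by_cases hge : e ≤ g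
    · -- every edge of P is > e, contradiction with e ∈ Tsel
      refine hne ((H.endsConnected_iff hab).2 (H.connects_mono ?_ hPcon))
      intro f hfP
      refine Finset.mem_filter.2 ⟨H.Tsel_subset A (Finset.mem_of_mem_erase (hPsub hfP)), ?_⟩
      have : f ≠ e := Finset.ne_of_mem_erase (hPsub hfP)
      exact lt_of_le_of_ne (hge.trans (hgle f hfP)) (Ne.symm this)
    · push_neg at hge
      -- g < e; show ends of g connected with edges > g
      obtain ⟨a, b, hgab⟩ := MGraph.sym2_exists (H.ends g)
      rcases H.connects_erase hgab hPcon (hPmin g hgP) with ⟨h1, h2⟩ | ⟨h1, h2⟩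
      all_goals {
        refine hgne ((H.endsConnected_iff hgab).2 ?_)
        have hsub : insert e (P.erase g) ⊆ A.filter fun f => g < f := by
          intro f hf
          rcases Finset.mem_insert.1 hf with rfl | hf
          · exact Finset.mem_filter.2 ⟨heA, hge⟩
          · refine Finset.mem_filter.2
              ⟨H.Tsel_subset A (Finset.mem_of_mem_erase (hPsub (Finset.mem_of_mem_erase hf))), ?_⟩
            exact lt_of_le_of_ne (hgle f (Finset.mem_of_mem_erase hf))
              (Ne.symm (Finset.ne_of_mem_erase hf))
        have hxy : H.Connects (insert e (P.erase g)) x y :=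
          H.connects_of_edge (Finset.mem_insert_self e _) hab
        have hmono : ∀ {p q : V}, H.Connects (P.erase g) p q →
            H.Connects (insert e (P.erase g)) p q := fun h =>
          H.connects_mono (Finset.subset_insert _ _) h
        first
        | exact H.connects_mono hsub (H.connects_trans (H.connects_symm (hmono h1))
            (H.connects_trans hxy (H.connects_symm (hmono h2))))
        | exact H.connects_mono hsub (H.connects_trans (hmono h2)
            (H.connects_trans (H.connects_symm hxy) (hmono h1)))
      }

lemma extActive_of_not_Tsel (H : MGraph V E) {A : Finset E} {e : E}
    (heA : e ∈ A) (heT : e ∉ H.Tsel A) : H.ExtActive (H.Tsel A) e := by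
  refine ⟨heT, H.endsConnected_Tsel A e heA, ?_⟩
  intro f hf
  simp only [cycleEdges, Finset.mem_insert, Finset.mem_filter] at hf
  rcases hf with rfl | ⟨hfT, hfcut⟩
  · exact le_rfl
  · skip
    by_contra hle
    push_neg at hle  -- f < e
    obtain ⟨x, y, hab⟩ := MGraph.sym2_exists (H.ends e)
    have hcon : H.Connects (H.Tsel A) x y :=
      (H.endsConnected_iff hab).1 (H.endsConnected_Tsel A e heA)
    obtain ⟨P, hPsub, hPcon, hPmin⟩ := H.exists_minimal_connecting _ x y hcon
    have hfP : f ∈ P := by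
      by_contra hfP
      exact hfcut ((H.endsConnected_iff hab).2
        (H.connects_mono (fun g hg => Finset.mem_erase.2 ⟨by rintro rfl; exact hfP hg, hPsub hg⟩)
          hPcon))
    have hPne : P.Nonempty := ⟨f, hfP⟩
    set g := P.min' hPne with hg
    have hgP : g ∈ P := P.min'_mem hPne
    have hgle : ∀ f' ∈ P, g ≤ f' := fun f' hf' => P.min'_le f' hf'
    have hgm : g ∈ H.Tsel A := hPsub hgP
    have hgne : ¬ H.EndsConnected (A.filter fun f' => g < f') g :=
      (Finset.mem_filter.1 hgm).2
    have hge : g < e := lt_of_le_of_lt (hgle f hfP) hle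
    have hgee : g ≠ e := ne_of_lt hge
    obtain ⟨a, b, hgab⟩ := MGraph.sym2_exists (H.ends g)
    rcases H.connects_erase hgab hPcon (hPmin g hgP) with ⟨h1, h2⟩ | ⟨h1, h2⟩
    all_goals {
      refine hgne ((H.endsConnected_iff hgab).2 ?_)
      have hsub : insert e (P.erase g) ⊆ A.filter fun f' => g < f' := by
        intro f' hf'
        rcases Finset.mem_insert.1 hf' with rfl | hf'
        · exact Finset.mem_filter.2 ⟨heA, hge⟩
        · refine Finset.mem_filter.2
            ⟨H.Tsel_subset A (hPsub (Finset.mem_of_mem_erase hf')), ?_⟩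
          exact lt_of_le_of_ne (hgle f' (Finset.mem_of_mem_erase hf'))
            (Ne.symm (Finset.ne_of_mem_erase hf'))
      have hxy : H.Connects (insert e (P.erase g)) x y :=
        H.connects_of_edge (Finset.mem_insert_self e _) hab
      have hmono : ∀ {p q : V}, H.Connects (P.erase g) p q →
          H.Connects (insert e (P.erase g)) p q := fun h =>
        H.connects_mono (Finset.subset_insert _ _) h
      first
      | exact H.connects_mono hsub (H.connects_trans (H.connects_symm (hmono h1))
          (H.connects_trans hxy (H.connects_symm (hmono h2))))
      | exact H.connects_mono hsub (H.connects_trans (hmono h2)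
          (H.connects_trans (H.connects_symm hxy) (hmono h1)))
    }

end MGraph

end Aux
section Glue
set_option linter.unusedSectionVars false
attribute [local instance 2000] Classical.propDecidable

namespace MGraph

variable {V E : Type} [Fintype V] [Fintype E] [LinearOrder E]

/-- For a forest `T` and an externally-active-style edge `e ∉ T`, the ends of `e`
are connected in `T` using only edges larger than `e`. -/
lemma connects_in_big (H : MGraph V E) {T : Finset E} (hT : H.IsForest T) {e : E}
    (he : e ∉ T) (hcyc : ∀ f ∈ H.cycleEdges T e, e ≤ f) {x y : V}
    (hab : H.ends e = s(x, y)) (hcon : H.Connects T x y) :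
    H.Connects (T.filter fun f => e < f) x y := by
  simp only [cycleEdges, Finset.mem_insert, Finset.mem_filter] at hcyc
  obtain ⟨P, hPsub, hPcon, hPmin⟩ := H.exists_minimal_connecting _ x y hcon
  refine H.connects_mono ?_ hPcon
  intro f hfP
  have hfT : f ∈ T := hPsub hfP
  have hfe : f ≠ e := fun h => he (h ▸ hfT)
  have hcut : ¬ H.Connects (T.erase f) x y :=
    H.forest_essential hT hPsub hPcon hfP (hPmin f hfP)
  have : e ≤ f := hcyc f (Or.inr ⟨hfT, fun h => hcut ((H.endsConnected_iff hab).1 h)⟩)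
  exact Finset.mem_filter.2 ⟨hfT, lt_of_le_of_ne this (Ne.symm hfe)⟩

lemma Tsel_eq (H : MGraph V E) {T A : Finset E} (hT : H.IsForest T)
    (hTA : T ⊆ A) (hS : ∀ e ∈ A, e ∉ T → H.ExtActive T e) : H.Tsel A = T := by
  apply Finset.Subset.antisymm
  · -- Tsel A ⊆ T
    intro e heT
    have heA : e ∈ A := H.Tsel_subset _ heT
    have hne : ¬ H.EndsConnected (A.filter fun f => e < f) e :=
      (Finset.mem_filter.1 heT).2
    by_contra h
    obtain ⟨henT, ⟨a, b, hab, hcon⟩, hcyc⟩ := hS e heA h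
    have := H.connects_in_big hT henT hcyc hab hcon
    refine hne ⟨a, b, hab, H.connects_mono ?_ this⟩
    intro g hg
    rw [Finset.mem_filter] at hg ⊢
    exact ⟨hTA hg.1, hg.2⟩
  · -- T ⊆ Tsel A
    intro e heT
    refine Finset.mem_filter.2 ⟨hTA heT, ?_⟩
    rintro ⟨u, v, huv, hcon⟩
    have hlift : H.Connects (T.filter fun f => e < f) u v := by
      refine H.connects_lift ?_ hcon
      intro f hf
      rw [Finset.mem_filter] at hf
      obtain ⟨hfA, hef⟩ := hf
      by_cases hfT : f ∈ T
      · obtain ⟨a, b, habf⟩ := MGraph.sym2_exists (H.ends f)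
        exact ⟨a, b, habf, H.connects_of_edge (Finset.mem_filter.2 ⟨hfT, hef⟩) habf⟩
      · obtain ⟨hfnT, ⟨a, b, habf, hconf⟩, hcycf⟩ := hS f hfA hfT
        have := H.connects_in_big hT hfnT hcycf habf hconf
        refine ⟨a, b, habf, H.connects_mono ?_ this⟩
        intro g hg
        rw [Finset.mem_filter] at hg ⊢
        exact ⟨hg.1, lt_trans hef hg.2⟩
    refine hT e heT ⟨u, v, huv, H.connects_mono ?_ hlift⟩
    intro g hg
    rw [Finset.mem_filter] at hg
    exact Finset.mem_erase.2 ⟨ne_of_gt hg.2, hg.1⟩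

lemma kA_eq_one_iff (H : MGraph V E) [Nonempty V] {A : Finset E} :
    H.kA A = 1 ↔ H.ConnectsAll A := by
  rw [kA, Nat.card_eq_one_iff_unique]
  constructor
  · rintro ⟨hsub, -⟩ u v
    have : (Quotient.mk (H.compSetoid A) u : H.Comp A) = Quotient.mk (H.compSetoid A) v :=
      hsub.elim _ _
    exact Quotient.exact this
  · intro h
    refine ⟨⟨fun a b => ?_⟩, ⟨Quotient.mk (H.compSetoid A) (Classical.arbitrary V)⟩⟩
    induction a using Quotient.inductionOn with
    | h u =>
    induction b using Quotient.inductionOn with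
    | h v =>
    exact Quotient.sound (h u v)

end MGraph

end Glue
/-- For a connected graph `H` with linearly ordered edges,
`[q^1] Z_T(H;q,γ) = Σ_{T∈𝒯(H)} (∏_{e∈T} γ_e)(∏_{e∈EA(T)} (1+γ_e))`. -/
theorem coeff_one_ZT_spanning_tree {V E R : Type} [Fintype V] [Fintype E] [Nonempty V]
    [LinearOrder E] [CommRing R] (H : MGraph V E) (hconn : H.ConnectsAll Finset.univ)
    (γ : E → R) :
    (H.ZT γ).coeff 1 =
      ∑ T ∈ Finset.univ.filter (fun T => H.IsForest T ∧ H.ConnectsAll T),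
        (∏ e ∈ T, γ e) * ∏ e ∈ H.extActives T, (1 + γ e) := by
  -- LHS: sum over connected spanning subgraphs
  have lhs : (H.ZT γ).coeff 1 =
      ∑ A ∈ Finset.univ.filter (fun A : Finset E => H.ConnectsAll A), ∏ e ∈ A, γ e := by
    rw [MGraph.ZT, Polynomial.finset_sum_coeff]
    rw [Finset.sum_filter]
    refine Finset.sum_congr rfl fun A _ => ?_
    rw [mul_comm, Polynomial.coeff_C_mul, Polynomial.coeff_X_pow]
    by_cases h : H.ConnectsAll A
    · rw [if_pos h, if_pos, mul_one]
      exact ((H.kA_eq_one_iff).2 h).symm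
    · rw [if_neg h, if_neg, mul_zero]
      intro h1
      exact h ((H.kA_eq_one_iff).1 h1.symm)
  rw [lhs]
  -- RHS: expand the product over externally active edges
  have rhs : ∀ T : Finset E, (∀ e ∈ H.extActives T, e ∉ T) →
      (∏ e ∈ T, γ e) * ∏ e ∈ H.extActives T, (1 + γ e) =
        ∑ S ∈ (H.extActives T).powerset, ∏ e ∈ T ∪ S, γ e := by
    intro T hd
    have h1 : ∏ e ∈ H.extActives T, (1 + γ e) =
        ∑ S ∈ (H.extActives T).powerset, ∏ e ∈ S, γ e := by
      rw [show ∏ e ∈ H.extActives T, (1 + γ e) = ∏ e ∈ H.extActives T, (γ e + 1) from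
        Finset.prod_congr rfl fun e _ => add_comm _ _]
      rw [Finset.prod_add]
      exact Finset.sum_congr rfl fun S _ => by rw [Finset.prod_const_one, mul_one]
    rw [h1, Finset.mul_sum]
    refine Finset.sum_congr rfl fun S hS => ?_
    rw [Finset.mem_powerset] at hS
    rw [Finset.prod_union]
    exact Finset.disjoint_right.2 fun e heS heT => hd e (hS heS) heT
  rw [Finset.sum_congr rfl fun T hT => rhs T (fun e he =>
    (Finset.mem_filter.1 he).2.1)]
  refine Eq.trans ?_ (Finset.sum_sigma' _ _ fun T S => ∏ e ∈ T ∪ S, γ e).symm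
  -- Bijection
  refine Finset.sum_nbij' (fun A => ⟨H.Tsel A, A \ H.Tsel A⟩) (fun p => p.1 ∪ p.2)
    ?_ ?_ ?_ ?_ ?_
  · intro A hA
    rw [Finset.mem_filter] at hA
    refine Finset.mem_sigma.2 ⟨Finset.mem_filter.2
      ⟨Finset.mem_univ _, H.isForest_Tsel A, H.connectsAll_Tsel hA.2⟩, ?_⟩
    refine Finset.mem_powerset.2 fun e he => ?_
    rw [Finset.mem_sdiff] at he
    exact Finset.mem_filter.2 ⟨Finset.mem_univ _, H.extActive_of_not_Tsel he.1 he.2⟩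
  · intro p hp
    rw [Finset.mem_sigma, Finset.mem_filter] at hp
    exact Finset.mem_filter.2 ⟨Finset.mem_univ _, fun u v =>
      H.connects_mono Finset.subset_union_left (hp.1.2.2 u v)⟩
  · intro A hA
    exact Finset.union_sdiff_of_subset (H.Tsel_subset A)
  · rintro ⟨T, S⟩ hp
    rw [Finset.mem_sigma, Finset.mem_filter, Finset.mem_powerset] at hp
    obtain ⟨⟨-, hTf, -⟩, hS⟩ := hp
    have hext : ∀ e ∈ S, H.ExtActive T e := fun e he =>
      (Finset.mem_filter.1 (hS he)).2
    have h1 : H.Tsel (T ∪ S) = T := by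
      refine H.Tsel_eq hTf Finset.subset_union_left fun e heA henT => ?_
      rcases Finset.mem_union.1 heA with h | h
      · exact absurd h henT
      · exact hext e h
    have hdisj : Disjoint T S :=
      Finset.disjoint_right.2 fun e heS heT => (hext e heS).1 heT
    simp only [h1]
    rw [Finset.union_sdiff_cancel_left hdisj]
  · intro A hA
    simp only
    rw [Finset.union_sdiff_of_subset (H.Tsel_subset A)]
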